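/- arXiv:0710.3004 — 4 statements merged into one kernel-verified Lean document; each statement's English description precedes it below -/
import Mathlib

section
/- Let U be a complete ultrametric space of diameter ≤ 1 and define T_U = (U × [0,∞))/∼ where (α,t) ∼ (β,t') iff t = t' and d(α,β) ≤ e^{-t}. Define D([x,t],[y,s]) = |t−s| if x and y satisfy d(x,y) ≤ e^{-min(t,s)}, and D([x,t],[y,s]) = t + s − 2·min{−ln d(x,y), t, s} otherwise. Then D is a well-defined metric on T_U. -/
open NNReal

def treeRel (U : Type*) [MetricSpace U] (p q : U × ℝ≥0) : Prop :=
  p.2 = q.2 ∧ dist p.1 q.1 ≤ Real.exp (-(p.2 : ℝ))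

noncomputable def treeDist (U : Type*) [MetricSpace U] (p q : U × ℝ≥0) : ℝ :=
  if dist p.1 q.1 ≤ Real.exp (-(min (p.2 : ℝ) (q.2 : ℝ)))
  then |(p.2 : ℝ) - (q.2 : ℝ)|
  else (p.2 : ℝ) + (q.2 : ℝ) -
    2 * min (-Real.log (dist p.1 q.1)) (min (p.2 : ℝ) (q.2 : ℝ))

noncomputable def Fval (U : Type*) [MetricSpace U] (x y : U) (m : ℝ) : ℝ :=
  if dist x y = 0 then m else min (-Real.log (dist x y)) m

section aux
variable {U : Type*} [MetricSpace U]

lemma Fval_le (x y : U) (m : ℝ) : Fval U x y m ≤ m := by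
  unfold Fval; split_ifs with h
  · exact le_rfl
  · exact min_le_right _ _

lemma Fval_eq_of_le {x y : U} {m : ℝ} (h : dist x y ≤ Real.exp (-m)) :
    Fval U x y m = m := by
  unfold Fval; split_ifs with h0
  · rfl
  · have hpos : 0 < dist x y := (dist_nonneg).lt_of_ne (Ne.symm h0)
    have := Real.log_le_log hpos h
    rw [Real.log_exp] at this
    exact min_eq_right (by linarith)

lemma neg_log_lt_of_not_le {x y : U} {m : ℝ} (h : ¬ dist x y ≤ Real.exp (-m)) :
    -Real.log (dist x y) < m := by
  have hd : Real.exp (-m) < dist x y := not_le.mp h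
  have := Real.log_lt_log (Real.exp_pos _) hd
  rw [Real.log_exp] at this
  linarith

lemma Fval_eq_of_not_le {x y : U} {m : ℝ} (h : ¬ dist x y ≤ Real.exp (-m)) :
    Fval U x y m = -Real.log (dist x y) := by
  have hd : Real.exp (-m) < dist x y := not_le.mp h
  have h0 : dist x y ≠ 0 := ne_of_gt (lt_trans (Real.exp_pos _) hd)
  unfold Fval
  rw [if_neg h0, min_eq_left (neg_log_lt_of_not_le h).le]

lemma treeDist_eq (p q : U × ℝ≥0) :
    treeDist U p q = (p.2 : ℝ) + (q.2 : ℝ) -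
      2 * Fval U p.1 q.1 (min (p.2 : ℝ) (q.2 : ℝ)) := by
  unfold treeDist; split_ifs with h
  · rw [Fval_eq_of_le h]
    have h1 : min (p.2 : ℝ) (q.2 : ℝ) + max (p.2 : ℝ) (q.2 : ℝ) = (p.2 : ℝ) + q.2 :=
      min_add_max _ _
    have h2 : max (p.2 : ℝ) (q.2 : ℝ) - min (p.2 : ℝ) (q.2 : ℝ) = |(p.2 : ℝ) - q.2| :=
      (max_sub_min_eq_abs _ _).trans (abs_sub_comm _ _)
    linarith
  · rw [Fval_eq_of_not_le h, min_eq_left (neg_log_lt_of_not_le h).le]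

/-- ultrametric: moving within a small ball doesn't change distance to far points -/
lemma dist_eq_of_far (hu : ∀ x y z : U, dist x y ≤ max (dist x z) (dist z y))
    {x x' y : U} {e : ℝ} (h1 : dist x x' ≤ e) (h2 : e < dist x y) :
    dist x' y = dist x y := by
  have ha : dist x' y ≤ max (dist x' x) (dist x y) := hu x' y x
  have hb : dist x y ≤ max (dist x x') (dist x' y) := hu x y x'
  rw [dist_comm x' x] at ha
  rcases max_cases (dist x x') (dist x' y) with ⟨hm, _⟩ | ⟨hm, _⟩
  · rw [hm] at hb; linarith [max_le (by linarith : dist x x' ≤ dist x y) (le_refl (dist x y))]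
  · rw [hm] at hb
    have : dist x' y ≤ dist x y := by
      rcases max_cases (dist x x') (dist x y) with ⟨hm2, _⟩ | ⟨hm2, _⟩ <;> rw [hm2] at ha <;> linarith
    linarith [le_antisymm this hb]

lemma treeDist_symm (p q : U × ℝ≥0) : treeDist U p q = treeDist U q p := by
  rw [treeDist_eq, treeDist_eq]
  have : Fval U p.1 q.1 (min (p.2 : ℝ) (q.2 : ℝ)) =
      Fval U q.1 p.1 (min (q.2 : ℝ) (p.2 : ℝ)) := by
    unfold Fval; rw [dist_comm, min_comm (q.2 : ℝ)]
  rw [this]; ring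

/-- one-sided well-definedness -/
lemma treeDist_wd1 (hu : ∀ x y z : U, dist x y ≤ max (dist x z) (dist z y))
    (x x' y : U) (t s : ℝ≥0) (h : dist x x' ≤ Real.exp (-(t : ℝ))) :
    treeDist U (x, t) (y, s) = treeDist U (x', t) (y, s) := by
  rw [treeDist_eq, treeDist_eq]
  simp only
  congr 1
  have hm : Real.exp (-(t : ℝ)) ≤ Real.exp (-(min (t : ℝ) (s : ℝ))) := by
    apply Real.exp_le_exp.mpr; simp [min_le_left]
  by_cases hc : dist x y ≤ Real.exp (-(min (t : ℝ) (s : ℝ)))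
  · have hc' : dist x' y ≤ Real.exp (-(min (t : ℝ) (s : ℝ))) := by
      calc dist x' y ≤ max (dist x' x) (dist x y) := hu x' y x
        _ ≤ Real.exp (-(min (t : ℝ) (s : ℝ))) := by
          apply max_le _ hc; rw [dist_comm]; linarith
    rw [Fval_eq_of_le hc, Fval_eq_of_le hc']
  · have hd : Real.exp (-(min (t : ℝ) (s : ℝ))) < dist x y := not_le.mp hc
    have heq : dist x' y = dist x y :=
      dist_eq_of_far hu (le_trans h hm) hd
    unfold Fval; rw [heq]

end aux

/-- For a complete ultrametric space `U` of diameter at most `1`, the formula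
`D` is a well-defined metric on the quotient `T_U = (U × [0,∞))/∼`. -/
theorem treeDist_wellDefined_metric (U : Type*) [MetricSpace U]
    [CompleteSpace U]
    (hu : ∀ x y z : U, dist x y ≤ max (dist x z) (dist z y))
    (hdiam : Metric.diam (Set.univ : Set U) ≤ 1) :
    (∀ p p' q q' : U × ℝ≥0, treeRel U p p' → treeRel U q q' →
        treeDist U p q = treeDist U p' q') ∧
    (∀ p q : U × ℝ≥0, treeDist U p q = 0 ↔ treeRel U p q) ∧
    (∀ p q : U × ℝ≥0, treeDist U p q = treeDist U q p) ∧
    (∀ p q r : U × ℝ≥0, treeDist U p r ≤ treeDist U p q + treeDist U q r) := by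
  refine ⟨?_, ?_, fun p q => treeDist_symm p q, ?_⟩
  · -- well-definedness
    rintro ⟨x, t⟩ ⟨x', t'⟩ ⟨y, s⟩ ⟨y', s'⟩ ⟨ht, hx⟩ ⟨hs, hy⟩
    simp only at ht hx hs hy
    subst ht; subst hs
    calc treeDist U (x, t) (y, s) = treeDist U (x', t) (y, s) := treeDist_wd1 hu x x' y t s hx
      _ = treeDist U (y, s) (x', t) := treeDist_symm _ _
      _ = treeDist U (y', s) (x', t) := treeDist_wd1 hu y y' x' s t hy
      _ = treeDist U (x', t) (y', s) := treeDist_symm _ _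
  · -- zero iff rel
    intro p q
    unfold treeDist treeRel
    split_ifs with h
    · constructor
      · intro h0
        have h1 : (p.2 : ℝ) = (q.2 : ℝ) := by
          have := abs_eq_zero.mp h0; linarith
        have h2 : p.2 = q.2 := NNReal.coe_injective h1
        refine ⟨h2, ?_⟩
        rw [h1]
        rwa [h1, min_self] at h
      · rintro ⟨h1, _⟩
        rw [h1]; simp
    · constructor
      · intro h0
        exfalso
        have hlog : -Real.log (dist p.1 q.1) < min (p.2 : ℝ) (q.2 : ℝ) :=
          neg_log_lt_of_not_le h
        rw [min_eq_left hlog.le] at h0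
        have := min_le_left (p.2 : ℝ) (q.2 : ℝ)
        have := min_le_right (p.2 : ℝ) (q.2 : ℝ)
        linarith
      · rintro ⟨h1, h2⟩
        exfalso
        apply h
        rw [h1, min_self]
        rwa [h1] at h2
  · -- triangle inequality
    intro p q r
    rw [treeDist_eq p r, treeDist_eq p q, treeDist_eq q r]
    set t := (p.2 : ℝ); set u := (q.2 : ℝ); set s := (r.2 : ℝ)
    set A := Fval U p.1 q.1 (min t u) with hA
    set B := Fval U q.1 r.1 (min u s) with hB
    set C := Fval U p.1 r.1 (min t s) with hC
    have hAu : A ≤ u := le_trans (Fval_le _ _ _) (min_le_right _ _)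
    have hAt : A ≤ t := le_trans (Fval_le _ _ _) (min_le_left _ _)
    have hBu : B ≤ u := le_trans (Fval_le _ _ _) (min_le_left _ _)
    have hBs : B ≤ s := le_trans (Fval_le _ _ _) (min_le_right _ _)
    have hmin : min A B ≤ C := by
      rw [hC]; unfold Fval
      split_ifs with h0
      · exact le_min (le_trans (min_le_left _ _) hAt) (le_trans (min_le_right _ _) hBs)
      · apply le_min _ (le_min (le_trans (min_le_left _ _) hAt)
          (le_trans (min_le_right _ _) hBs))
        have hpos : 0 < dist p.1 r.1 := (dist_nonneg).lt_of_ne (Ne.symm h0)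
        rcases le_max_iff.mp (hu p.1 r.1 q.1) with hle | hle
        · -- dist p r ≤ dist p q
          have h1 : 0 < dist p.1 q.1 := lt_of_lt_of_le hpos hle
          have h2 : Real.log (dist p.1 r.1) ≤ Real.log (dist p.1 q.1) :=
            Real.log_le_log hpos hle
          have hA' : A ≤ -Real.log (dist p.1 q.1) := by
            rw [hA]; unfold Fval; rw [if_neg (ne_of_gt h1)]; exact min_le_left _ _
          calc min A B ≤ A := min_le_left _ _
            _ ≤ -Real.log (dist p.1 q.1) := hA'
            _ ≤ -Real.log (dist p.1 r.1) := by linarith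
        · -- dist p r ≤ dist q r
          have h1 : 0 < dist q.1 r.1 := lt_of_lt_of_le hpos hle
          have h2 : Real.log (dist p.1 r.1) ≤ Real.log (dist q.1 r.1) :=
            Real.log_le_log hpos hle
          have hB' : B ≤ -Real.log (dist q.1 r.1) := by
            rw [hB]; unfold Fval; rw [if_neg (ne_of_gt h1)]; exact min_le_left _ _
          calc min A B ≤ B := min_le_right _ _
            _ ≤ -Real.log (dist q.1 r.1) := hB'
            _ ≤ -Real.log (dist p.1 r.1) := by linarith
    have hmm : min A B + max A B = A + B := min_add_max A B
    have hmax : max A B ≤ u := max_le hAu hBu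
    linarith
end

section
/- Let (T,v) be a rooted ℝ-tree and suppose f : (T,v) → (T',w) is a rooted continuous metrically proper map. Suppose M, N > 0 satisfy f⁻¹(B(w,M)) ⊆ B(v,N). Then for every point c with d(v,c) = N there exists a unique point c' with d(w,c') = M such that f(T_c) ⊆ T'_{c'}, where T_c = {x ∈ T : c ∈ [v,x]} is the subtree determined by c. -/
open NNReal

/-- An `ℝ`-tree: a metric space that is uniquely arcwise connected and in which
any two points are joined by a geodesic segment isometric to a real interval. -/
def IsRTree (T : Type*) [MetricSpace T] : Prop :=
  (∀ x y : T, ∃ γ : ℝ → T, γ 0 = x ∧ γ (dist x y) = y ∧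
      ∀ s ∈ Set.Icc (0:ℝ) (dist x y), ∀ t ∈ Set.Icc (0:ℝ) (dist x y),
        dist (γ s) (γ t) = |s - t|) ∧
  (∀ x y : T, ∀ γ₁ γ₂ : Path x y, Function.Injective γ₁ → Function.Injective γ₂ →
      Set.range γ₁ = Set.range γ₂)

section Helpers
variable {T : Type*} [MetricSpace T]


lemma exists_btw (hT : IsRTree T) (x z : T) {r : ℝ} (h0 : 0 ≤ r) (hr : r ≤ dist x z) :
    ∃ y : T, dist x y = r ∧ dist x y + dist y z = dist x z := by
  obtain ⟨γ, hγ0, hγD, hiso⟩ := hT.1 x z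
  have hD0 : (0:ℝ) ≤ dist x z := dist_nonneg
  have h1 : dist x (γ r) = r := by
    have h := hiso 0 ⟨le_rfl, hD0⟩ r ⟨h0, hr⟩
    rw [hγ0] at h
    rw [h, abs_of_nonpos (by linarith)]; ring
  have h2 : dist (γ r) z = dist x z - r := by
    have h := hiso r ⟨h0, hr⟩ (dist x z) ⟨hD0, le_rfl⟩
    rw [hγD] at h
    rw [h, abs_of_nonpos (by linarith)]; ring
  exact ⟨γ r, h1, by rw [h1, h2]; ring⟩

lemma btw_trans {w a b c : T} (h1 : dist w a + dist a b = dist w b)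
    (h2 : dist w b + dist b c = dist w c) : dist w a + dist a c = dist w c := by
  have t1 := dist_triangle a b c
  have t2 := dist_triangle w a c
  linarith

lemma exists_geodesic_path (hT : IsRTree T) {x u : T} (hxu : x ≠ u) {y : T}
    (hy : dist x y + dist y u = dist x u) :
    ∃ p : Path x u, Function.Injective ⇑p ∧ (∃ t : unitInterval, p t = y) ∧
      ∀ s : unitInterval, dist x (p s) = s * dist x u ∧ dist (p s) u = (1 - s) * dist x u := by
  have hDpos : 0 < dist x u := dist_pos.mpr hxu
  have hr0 : 0 ≤ dist x y := dist_nonneg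
  have hd20 : 0 ≤ dist y u := dist_nonneg
  have hrD : dist x y ≤ dist x u := by linarith
  obtain ⟨γ1, hγ10, hγ1r, hiso1⟩ := hT.1 x y
  obtain ⟨γ2, hγ20, hγ2d, hiso2⟩ := hT.1 y u
  set δ : ℝ → T := fun t => if t ≤ dist x y then γ1 t else γ2 (t - dist x y) with hδdef
  have hδ_eq : ∀ t, δ t = if t ≤ dist x y then γ1 t else γ2 (t - dist x y) := fun t => rfl
  have hδ0 : δ 0 = x := by rw [hδ_eq, if_pos hr0, hγ10]
  have hδr : δ (dist x y) = y := by rw [hδ_eq, if_pos le_rfl, hγ1r]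
  have hδD : δ (dist x u) = u := by
    rw [hδ_eq]
    by_cases hDr : dist x u ≤ dist x y
    · rw [if_pos hDr]
      have h1 : dist x y = dist x u := le_antisymm hrD hDr
      have h2 : y = u := by
        have : dist y u = 0 := by linarith
        exact dist_eq_zero.mp this
      rw [← h1, hγ1r, h2]
    · rw [if_neg hDr]
      have h1 : dist x u - dist x y = dist y u := by linarith
      rw [h1, hγ2d]
  have key : ∀ s t : ℝ, s ∈ Set.Icc 0 (dist x u) → t ∈ Set.Icc 0 (dist x u) → s ≤ t →
      dist (δ s) (δ t) = t - s := by
    intro s t hs ht hst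
    by_cases htr : t ≤ dist x y
    · have hsr : s ≤ dist x y := le_trans hst htr
      rw [hδ_eq s, hδ_eq t, if_pos hsr, if_pos htr,
        hiso1 s ⟨hs.1, hsr⟩ t ⟨ht.1, htr⟩, abs_of_nonpos (by linarith)]
      ring
    · push_neg at htr
      by_cases hsr : s ≤ dist x y
      · have hdom : t - dist x y ∈ Set.Icc 0 (dist y u) := ⟨by linarith, by linarith [ht.2]⟩
        have h1 : dist (γ1 s) y = dist x y - s := by
          have h := hiso1 s ⟨hs.1, hsr⟩ (dist x y) ⟨hr0, le_rfl⟩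
          rw [hγ1r] at h
          rw [h, abs_of_nonpos (by linarith)]; ring
        have h2 : dist y (γ2 (t - dist x y)) = t - dist x y := by
          have h := hiso2 0 ⟨le_rfl, hd20⟩ (t - dist x y) hdom
          rw [hγ20] at h
          rw [h, abs_of_nonpos (by linarith)]; ring
        have h3 : dist x (γ1 s) = s := by
          have h := hiso1 0 ⟨le_rfl, hr0⟩ s ⟨hs.1, hsr⟩
          rw [hγ10] at h
          rw [h, abs_of_nonpos (by linarith [hs.1])]; ring
        have h4 : dist (γ2 (t - dist x y)) u = dist y u - (t - dist x y) := by
          have h := hiso2 (t - dist x y) hdom (dist y u) ⟨hd20, le_rfl⟩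
          rw [hγ2d] at h
          rw [h, abs_of_nonpos (by linarith [hdom.2])]; ring
        have hup : dist (γ1 s) (γ2 (t - dist x y)) ≤ t - s := by
          calc dist (γ1 s) (γ2 (t - dist x y))
              ≤ dist (γ1 s) y + dist y (γ2 (t - dist x y)) := dist_triangle _ _ _
            _ = t - s := by rw [h1, h2]; ring
        have hlow := dist_triangle4 x (γ1 s) (γ2 (t - dist x y)) u
        rw [h3, h4] at hlow
        rw [hδ_eq s, hδ_eq t, if_pos hsr, if_neg (not_le.mpr htr)]
        linarith
      · push_neg at hsr
        have hdoms : s - dist x y ∈ Set.Icc 0 (dist y u) := ⟨by linarith, by linarith [hs.2]⟩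
        have hdomt : t - dist x y ∈ Set.Icc 0 (dist y u) := ⟨by linarith, by linarith [ht.2]⟩
        rw [hδ_eq s, hδ_eq t, if_neg (not_le.mpr hsr), if_neg (not_le.mpr htr),
          hiso2 _ hdoms _ hdomt, abs_of_nonpos (by linarith)]
        ring
  have hiso : ∀ s t : ℝ, s ∈ Set.Icc 0 (dist x u) → t ∈ Set.Icc 0 (dist x u) →
      dist (δ s) (δ t) = |s - t| := by
    intro s t hs ht
    rcases le_total s t with h | h
    · rw [key s t hs ht h, abs_of_nonpos (by linarith)]; ring
    · rw [dist_comm, key t s ht hs h, abs_of_nonneg (by linarith)]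
  have hcont : ContinuousOn δ (Set.Icc 0 (dist x u)) := by
    apply LipschitzOnWith.continuousOn (K := 1)
    intro s hs t ht
    rw [edist_dist, edist_dist, hiso s t hs ht, Real.dist_eq]
    simp
  have hmaps : ∀ t : unitInterval, (t : ℝ) * dist x u ∈ Set.Icc 0 (dist x u) := by
    intro t
    constructor
    · exact mul_nonneg t.2.1 hDpos.le
    · calc (t:ℝ) * dist x u ≤ 1 * dist x u :=
          mul_le_mul_of_nonneg_right t.2.2 hDpos.le
        _ = dist x u := one_mul _
  have hq0 : δ (((0:unitInterval):ℝ) * dist x u) = x := by norm_num [hδ0]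
  have hq1 : δ (((1:unitInterval):ℝ) * dist x u) = u := by norm_num [hδD]
  refine ⟨{ toFun := fun t => δ ((t : ℝ) * dist x u),
            continuous_toFun := hcont.comp_continuous (by continuity) hmaps,
            source' := hq0,
            target' := hq1 }, ?_, ?_, ?_⟩
  · intro s t h
    simp only [Path.coe_mk_mk] at h
    have h2 := hiso _ _ (hmaps s) (hmaps t)
    rw [h, dist_self] at h2
    have h3 : (s:ℝ) * dist x u = (t:ℝ) * dist x u := by
      have := abs_eq_zero.mp h2.symm
      linarith
    exact Subtype.ext (mul_right_cancel₀ hDpos.ne' h3)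
  · refine ⟨⟨dist x y / dist x u, div_nonneg hr0 hDpos.le, (div_le_one hDpos).mpr hrD⟩, ?_⟩
    show δ (dist x y / dist x u * dist x u) = y
    rw [div_mul_cancel₀ _ hDpos.ne', hδr]
  · intro s
    constructor
    · have h := hiso 0 ((s:ℝ) * dist x u) ⟨le_rfl, hDpos.le⟩ (hmaps s)
      rw [hδ0] at h
      show dist x (δ ((s:ℝ) * dist x u)) = (s:ℝ) * dist x u
      rw [h, abs_of_nonpos (by linarith [(hmaps s).1])]
      ring
    · have h := hiso ((s:ℝ) * dist x u) (dist x u) (hmaps s) ⟨hDpos.le, le_rfl⟩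
      rw [hδD] at h
      show dist (δ ((s:ℝ) * dist x u)) u = (1 - (s:ℝ)) * dist x u
      rw [h, abs_of_nonpos (by linarith [(hmaps s).2])]
      ring
lemma btw_unique (hT : IsRTree T) {x z y1 y2 : T}
    (h1 : dist x y1 + dist y1 z = dist x z) (h2 : dist x y2 + dist y2 z = dist x z)
    (hd : dist x y1 = dist x y2) : y1 = y2 := by
  by_cases hxz : x = z
  · subst hxz
    have e1 : dist x y1 = 0 := by
      rw [dist_self] at h1
      rw [dist_comm y1 x] at h1
      linarith
    have e2 : dist x y2 = 0 := by
      rw [dist_self] at h2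
      rw [dist_comm y2 x] at h2
      linarith
    rw [← dist_eq_zero.mp e1, ← dist_eq_zero.mp e2]
  · obtain ⟨p, hpinj, ⟨t, hpt⟩, hpiso⟩ := exists_geodesic_path hT hxz h1
    obtain ⟨p', hp'inj, ⟨t', hp't⟩, hp'iso⟩ := exists_geodesic_path hT hxz h2
    have hrange := hT.2 x z p' p hp'inj hpinj
    have hmem : y2 ∈ Set.range ⇑p := hrange ▸ ⟨t', hp't⟩
    obtain ⟨s, hs⟩ := hmem
    have hDpos : 0 < dist x z := dist_pos.mpr hxz
    have e1 : dist x y2 = (s:ℝ) * dist x z := by rw [← hs]; exact (hpiso s).1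
    have e2 : dist x y1 = (t:ℝ) * dist x z := by rw [← hpt]; exact (hpiso t).1
    have hst : (s:ℝ) = (t:ℝ) := by
      have h3 : (s:ℝ) * dist x z = (t:ℝ) * dist x z := by rw [← e1, ← e2, hd]
      exact mul_right_cancel₀ hDpos.ne' h3
    rw [← hs, ← hpt]
    exact congrArg _ (Subtype.ext hst.symm)

lemma btw_or (hT : IsRTree T) (x z u y : T) (h : dist x y + dist y u = dist x u) :
    dist x y + dist y z = dist x z ∨ dist z y + dist y u = dist z u := by
  by_cases hyx : y = x
  · left; subst hyx; simp
  by_cases hyu : y = u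
  · right; subst hyu; simp
  by_cases hxz : x = z
  · right; subst hxz; exact h
  by_cases hzu : z = u
  · left; subst hzu; exact h
  by_cases hyz : y = z
  · right; subst hyz; simp
  by_cases hxu : x = u
  · exfalso
    apply hyx
    subst hxu
    rw [dist_self] at h
    rw [dist_comm y x] at h
    have : dist x y = 0 := by linarith
    exact (dist_eq_zero.mp this).symm
  by_contra hcon
  push_neg at hcon
  obtain ⟨hne1, hne2⟩ := hcon
  have hbxx : dist x x + dist x z = dist x z := by simp
  obtain ⟨p1, hp1inj, _, hp1iso⟩ := exists_geodesic_path hT hxz hbxx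
  have hbzz : dist z z + dist z u = dist z u := by simp
  obtain ⟨p2, hp2inj, _, hp2iso⟩ := exists_geodesic_path hT hzu hbzz
  have hy1 : y ∉ Set.range ⇑p1 := by
    rintro ⟨s, rfl⟩
    apply hne1
    have e1 := (hp1iso s).1
    have e2 := (hp1iso s).2
    rw [e1, e2]; ring
  have hy2 : y ∉ Set.range ⇑p2 := by
    rintro ⟨s, rfl⟩
    apply hne2
    have e1 := (hp2iso s).1
    have e2 := (hp2iso s).2
    rw [e1, e2]; ring
  -- surgery: find least point of p1 hitting range of p2
  have hSclosed : IsClosed {s : unitInterval | p1 s ∈ Set.range ⇑p2} :=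
    IsClosed.preimage p1.continuous (isCompact_range p2.continuous).isClosed
  have hSne : Set.Nonempty {s : unitInterval | p1 s ∈ Set.range ⇑p2} :=
    ⟨1, ⟨0, p2.source.trans p1.target.symm⟩⟩
  obtain ⟨a, haS, haLB⟩ := hSclosed.isCompact.exists_isLeast hSne
  obtain ⟨b, hb⟩ := haS
  -- hb : p2 b = p1 a
  have hℓa : (a:ℝ) ≤ (a:ℝ) + 1 - (b:ℝ) := by have := b.2.2; linarith
  have hℓpos : 0 < (a:ℝ) + 1 - (b:ℝ) := by
    by_contra hle
    push_neg at hle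
    have ha0 : (a:ℝ) = 0 := le_antisymm (by linarith [b.2.2]) a.2.1
    have hb1 : (b:ℝ) = 1 := le_antisymm b.2.2 (by linarith [a.2.1])
    apply hxu
    have e1 : p1 a = x := by
      have : a = (0 : unitInterval) := Subtype.ext ha0
      rw [this, p1.source]
    have e2 : p2 b = u := by
      have : b = (1 : unitInterval) := Subtype.ext hb1
      rw [this, p2.target]
    rw [← e1, ← hb, e2]
  set ℓ : ℝ := (a:ℝ) + 1 - (b:ℝ) with hℓdef
  set F : ℝ → T := fun t => if t ≤ (a:ℝ) then p1.extend t else p2.extend ((b:ℝ) + (t - (a:ℝ)))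
    with hFdef
  have hF_eq : ∀ t, F t = if t ≤ (a:ℝ) then p1.extend t else p2.extend ((b:ℝ) + (t - (a:ℝ))) :=
    fun t => rfl
  have hFcont : Continuous F := by
    apply Continuous.if_le p1.continuous_extend
      (p2.continuous_extend.comp (continuous_const.add (continuous_id.sub continuous_const)))
      continuous_id continuous_const
    intro t ht
    have ht' : t = (a:ℝ) := ht
    subst ht'
    show p1.extend (a:ℝ) = p2.extend ((b:ℝ) + ((a:ℝ) - (a:ℝ)))
    have e1 : (b:ℝ) + ((a:ℝ) - (a:ℝ)) = (b:ℝ) := by ring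
    rw [e1, Path.extend_apply p1 a.2, Path.extend_apply p2 b.2]
    simp only [Subtype.coe_eta]
    exact hb.symm
  have hmapsq : ∀ t : unitInterval, (t:ℝ) * ℓ ∈ Set.Icc 0 ℓ := by
    intro t
    constructor
    · exact mul_nonneg t.2.1 hℓpos.le
    · calc (t:ℝ) * ℓ ≤ 1 * ℓ := mul_le_mul_of_nonneg_right t.2.2 hℓpos.le
        _ = ℓ := one_mul _
  have hq0 : F (((0:unitInterval):ℝ) * ℓ) = x := by
    norm_num
    rw [hF_eq, if_pos a.2.1, Path.extend_zero]
  have hq1 : F (((1:unitInterval):ℝ) * ℓ) = u := by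
    norm_num
    by_cases hb1 : (b:ℝ) = 1
    · have hℓa' : ℓ = (a:ℝ) := by rw [hℓdef, hb1]; ring
      rw [hℓa', hF_eq, if_pos le_rfl, Path.extend_apply p1 a.2]
      simp only [Subtype.coe_eta]
      rw [← hb]
      have : b = (1 : unitInterval) := Subtype.ext hb1
      rw [this, p2.target]
    · have hblt : (b:ℝ) < 1 := lt_of_le_of_ne b.2.2 hb1
      have haℓ : ¬ (ℓ ≤ (a:ℝ)) := by rw [hℓdef]; push_neg; linarith
      rw [hF_eq, if_neg haℓ]
      have e1 : (b:ℝ) + (ℓ - (a:ℝ)) = 1 := by rw [hℓdef]; ring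
      rw [e1, Path.extend_one]
  have haux : ∀ s t : ℝ, s ∈ Set.Icc 0 ℓ → t ∈ Set.Icc 0 ℓ → s ≤ t → F s = F t → s = t := by
    intro s t hs ht hst hFeq
    by_cases hta : t ≤ (a:ℝ)
    · have hsa : s ≤ (a:ℝ) := le_trans hst hta
      have hsI : s ∈ Set.Icc (0:ℝ) 1 := ⟨hs.1, le_trans hsa a.2.2⟩
      have htI : t ∈ Set.Icc (0:ℝ) 1 := ⟨ht.1, le_trans hta a.2.2⟩
      rw [hF_eq s, hF_eq t, if_pos hsa, if_pos hta,
        Path.extend_apply p1 hsI, Path.extend_apply p1 htI] at hFeq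
      exact congrArg Subtype.val (hp1inj hFeq)
    · push_neg at hta
      have hbt : (b:ℝ) + (t - (a:ℝ)) ∈ Set.Icc (0:ℝ) 1 :=
        ⟨by linarith [b.2.1], by have := ht.2; rw [hℓdef] at this; linarith⟩
      by_cases hsa : s ≤ (a:ℝ)
      · have hsI : s ∈ Set.Icc (0:ℝ) 1 := ⟨hs.1, le_trans hsa a.2.2⟩
        rw [hF_eq s, hF_eq t, if_pos hsa, if_neg (not_le.mpr hta),
          Path.extend_apply p1 hsI, Path.extend_apply p2 hbt] at hFeq
        have hmem : (⟨s, hsI⟩ : unitInterval) ∈ {s : unitInterval | p1 s ∈ Set.range ⇑p2} :=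
          ⟨⟨_, hbt⟩, hFeq.symm⟩
        have has : (a:ℝ) ≤ s := haLB hmem
        have hsa' : s = (a:ℝ) := le_antisymm hsa has
        exfalso
        have e : (⟨s, hsI⟩ : unitInterval) = a := Subtype.ext hsa'
        rw [e, ← hb] at hFeq
        have h6 : (b:ℝ) = (b:ℝ) + (t - (a:ℝ)) := congrArg Subtype.val (hp2inj hFeq)
        linarith
      · push_neg at hsa
        have hbs : (b:ℝ) + (s - (a:ℝ)) ∈ Set.Icc (0:ℝ) 1 :=
          ⟨by linarith [b.2.1], by have := hs.2; rw [hℓdef] at this; linarith⟩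
        rw [hF_eq s, hF_eq t, if_neg (not_le.mpr hsa), if_neg (not_le.mpr hta),
          Path.extend_apply p2 hbs, Path.extend_apply p2 hbt] at hFeq
        have h5 : (b:ℝ) + (s - (a:ℝ)) = (b:ℝ) + (t - (a:ℝ)) :=
          congrArg Subtype.val (hp2inj hFeq)
        linarith
  have hqcont : Continuous (fun t : unitInterval => F ((t:ℝ) * ℓ)) :=
    hFcont.comp (continuous_subtype_val.mul continuous_const)
  let q : Path x u :=
    { toFun := fun t => F ((t:ℝ) * ℓ), continuous_toFun := hqcont,
      source' := hq0, target' := hq1 }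
  have hqcoe : ∀ t, q t = F ((t:ℝ) * ℓ) := fun t => rfl
  have hqinj : Function.Injective ⇑q := by
    intro s t hEq
    rw [hqcoe, hqcoe] at hEq
    rcases le_total ((s:ℝ) * ℓ) ((t:ℝ) * ℓ) with hle | hle
    · have h5 := haux _ _ (hmapsq s) (hmapsq t) hle hEq
      exact Subtype.ext (mul_right_cancel₀ hℓpos.ne' h5)
    · have h5 := haux _ _ (hmapsq t) (hmapsq s) hle hEq.symm
      exact Subtype.ext (mul_right_cancel₀ hℓpos.ne' h5.symm)
  obtain ⟨pδ, hpδinj, ⟨tδ, htδ⟩, _⟩ := exists_geodesic_path hT hxu h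
  have hrange := hT.2 x u pδ q hpδinj hqinj
  have hyq : y ∈ Set.range ⇑q := hrange ▸ ⟨tδ, htδ⟩
  obtain ⟨t, ht⟩ := hyq
  rw [hqcoe] at ht
  by_cases hta : (t:ℝ) * ℓ ≤ (a:ℝ)
  · apply hy1
    have htI : (t:ℝ) * ℓ ∈ Set.Icc (0:ℝ) 1 := ⟨(hmapsq t).1, le_trans hta a.2.2⟩
    rw [hF_eq, if_pos hta, Path.extend_apply p1 htI] at ht
    exact ⟨_, ht⟩
  · apply hy2
    push_neg at hta
    have hbt : (b:ℝ) + ((t:ℝ) * ℓ - (a:ℝ)) ∈ Set.Icc (0:ℝ) 1 :=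
      ⟨by linarith [b.2.1], by linarith [(hmapsq t).2, hℓdef]⟩
    rw [hF_eq, if_neg (not_le.mpr hta), Path.extend_apply p2 hbt] at ht
    exact ⟨_, ht⟩

end Helpers

/-- If `f : (T,v) → (T',w)` is a rooted continuous metrically proper map between
rooted `ℝ`-trees and `f⁻¹(B(w,M)) ⊆ B(v,N)`, then for every `c` at distance `N`
from the root there is a unique `c'` at distance `M` from `w` with
`f(T_c) ⊆ T'_{c'}`.  Here `T_c = {x : c ∈ [v,x]}` is described metrically by
`d(v,c) + d(c,x) = d(v,x)`. -/
theorem image_of_subtrees {T T' : Type*} [MetricSpace T] [MetricSpace T']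
    (hT : IsRTree T) (hT' : IsRTree T') (v : T) (w : T')
    (f : T → T') (hfc : Continuous f) (hfroot : f v = w)
    (hproper : ∀ A : Set T', Bornology.IsBounded A → Bornology.IsBounded (f ⁻¹' A))
    (M N : ℝ) (hM : 0 < M) (hN : 0 < N)
    (hball : f ⁻¹' Metric.ball w M ⊆ Metric.ball v N) :
    ∀ c : T, dist v c = N →
      ∃! c' : T', dist w c' = M ∧
        ∀ x : T, dist v c + dist c x = dist v x →
          dist w c' + dist c' (f x) = dist w (f x) := by
  intro c hc
  have h1 : ∀ z : T, N ≤ dist v z → M ≤ dist w (f z) := by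
    intro z hz
    by_contra hlt
    push_neg at hlt
    have hmem : z ∈ f ⁻¹' Metric.ball w M := by
      rw [Set.mem_preimage, Metric.mem_ball, dist_comm]
      exact hlt
    have h2 := hball hmem
    rw [Metric.mem_ball, dist_comm] at h2
    linarith
  have hfcM : M ≤ dist w (f c) := h1 c (le_of_eq hc.symm)
  obtain ⟨c', hc'M, hc'btw⟩ := exists_btw hT' w (f c) hM.le hfcM
  refine ⟨c', ⟨hc'M, ?_⟩, ?_⟩
  · intro x hx
    by_contra hcon
    have hL0 : 0 ≤ dist c x := dist_nonneg
    have hvx : dist v x = N + dist c x := by rw [← hc]; linarith [hx]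
    have hfxM : M ≤ dist w (f x) := h1 x (by linarith)
    have htri1 := dist_triangle w (f c) (f x)
    have htri2 := dist_triangle w (f x) (f c)
    have hcomm : dist (f x) (f c) = dist (f c) (f x) := dist_comm _ _
    set σ : ℝ := (dist w (f c) + dist w (f x) - dist (f c) (f x)) / 2 with hσdef
    obtain ⟨y, hyfc, hybtw⟩ := exists_btw hT' (f c) (f x) (r := dist w (f c) - σ)
      (by rw [hσdef]; linarith) (by rw [hσdef]; linarith)
    have hyw : dist w y = σ := by
      rcases btw_or hT' (f c) w (f x) y hybtw with hcase | hcase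
      · rw [dist_comm (f c) w, dist_comm y w] at hcase
        linarith
      · linarith
    have hσM : σ < M := by
      by_contra hge
      push_neg at hge
      have hbwyfc : dist w y + dist y (f c) = dist w (f c) := by
        rw [hyw, dist_comm y (f c)]
        linarith
      have hbwyfx : dist w y + dist y (f x) = dist w (f x) := by
        rw [hyw]
        linarith
      obtain ⟨c₀, hc₀M, hc₀btw⟩ := exists_btw hT' w y hM.le (by rw [hyw]; exact hge)
      have h5 : dist w c₀ + dist c₀ (f c) = dist w (f c) := btw_trans hc₀btw hbwyfc
      have hc₀c' : c₀ = c' := btw_unique hT' h5 hc'btw (by rw [hc₀M, hc'M])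
      apply hcon
      rw [← hc₀c']
      exact btw_trans hc₀btw hbwyfx
    have hywM : dist w y < M := by rw [hyw]; exact hσM
    have hyfc_ne : y ≠ f c := by
      intro hEq
      rw [hEq] at hywM
      exact absurd hfcM (not_le.mpr hywM)
    -- geodesic from c to x in T
    obtain ⟨γ, hγ0, hγL, hisoγ⟩ := hT.1 c x
    have hγcont : ContinuousOn γ (Set.Icc 0 (dist c x)) := by
      apply LipschitzOnWith.continuousOn (K := 1)
      intro s hs t ht
      rw [edist_dist, edist_dist, hisoγ s hs t ht, Real.dist_eq]
      simp
    set cl : ℝ → ℝ := fun t => max 0 (min t (dist c x)) with hcl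
    have hclmem : ∀ t, cl t ∈ Set.Icc 0 (dist c x) :=
      fun t => ⟨le_max_left _ _, max_le hL0 (min_le_right _ _)⟩
    have hclcont : Continuous cl := continuous_const.max (continuous_id.min continuous_const)
    set g : ℝ → T' := fun t => f (γ (cl t)) with hgdef
    have hg_eq : ∀ t, g t = f (γ (cl t)) := fun _ => rfl
    have hgcont : Continuous g := hfc.comp (hγcont.comp_continuous hclcont hclmem)
    have hg0 : g 0 = f c := by
      have e1 : cl 0 = 0 := by
        show max 0 (min 0 (dist c x)) = 0
        rw [min_eq_left hL0, max_self]
      rw [hg_eq, e1, hγ0]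
    have hgL : g (dist c x) = f x := by
      have e1 : cl (dist c x) = dist c x := by
        show max 0 (min (dist c x) (dist c x)) = dist c x
        rw [min_self, max_eq_right hL0]
      rw [hg_eq, e1, hγL]
    have hgM : ∀ t, M ≤ dist w (g t) := by
      intro t
      rw [hg_eq]
      apply h1
      have hs := hclmem t
      have h7 : dist (γ (cl t)) x = dist c x - cl t := by
        have h := hisoγ (cl t) hs (dist c x) ⟨hL0, le_rfl⟩
        rw [hγL] at h
        rw [h, abs_of_nonpos (by linarith [hs.2])]
        ring
      have h8 := dist_triangle v (γ (cl t)) x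
      rw [h7] at h8
      linarith [hs.1]
    set V : Set ℝ := {t | dist (f c) y + dist y (g t) = dist (f c) (g t)} with hVdef
    have hVclosed : IsClosed V :=
      isClosed_eq (continuous_const.add (continuous_const.dist hgcont))
        (continuous_const.dist hgcont)
    have hVopen : IsOpen V := by
      rw [isOpen_iff_mem_nhds]
      intro t₀ ht₀
      have hne : 0 < dist y (g t₀) := by
        rw [dist_pos]
        intro hEq
        have h9 := hgM t₀
        rw [← hEq] at h9
        exact absurd h9 (not_le.mpr hywM)
      have hOopen : IsOpen {t : ℝ | dist (g t) (g t₀) < dist y (g t₀)} :=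
        isOpen_lt (hgcont.dist continuous_const) continuous_const
      refine Filter.mem_of_superset (hOopen.mem_nhds ?_) ?_
      · show dist (g t₀) (g t₀) < dist y (g t₀)
        rw [dist_self]
        exact hne
      · intro t ht'
        have ht'' : dist (g t) (g t₀) < dist y (g t₀) := ht'
        rcases btw_or hT' (f c) (g t) (g t₀) y ht₀ with hcase | hcase
        · exact hcase
        · exfalso
          have := dist_nonneg (x := g t) (y := y)
          linarith
    have hsub : Set.Icc (0:ℝ) (dist c x) ⊆ Vᶜ ∪ V := by
      intro t _
      rcases em (t ∈ V) with hm | hm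
      · exact Or.inr hm
      · exact Or.inl hm
    have h0U : (0:ℝ) ∈ Vᶜ := by
      intro habs
      have habs' : dist (f c) y + dist y (g 0) = dist (f c) (g 0) := habs
      rw [hg0, dist_self] at habs'
      have hd1 : dist y (f c) = dist (f c) y := dist_comm _ _
      have hpos : 0 < dist (f c) y := dist_pos.mpr (Ne.symm hyfc_ne)
      linarith
    have hLV : (dist c x) ∈ V := by
      show dist (f c) y + dist y (g (dist c x)) = dist (f c) (g (dist c x))
      rw [hgL]
      exact hybtw
    have hconn := isPreconnected_Icc (a := (0:ℝ)) (b := dist c x) Vᶜ V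
      hVclosed.isOpen_compl hVopen hsub ⟨0, ⟨le_rfl, hL0⟩, h0U⟩
      ⟨dist c x, ⟨hL0, le_rfl⟩, hLV⟩
    obtain ⟨t, _, htU, htV⟩ := hconn
    exact htU htV
  · intro z hz
    obtain ⟨hzM, hzprop⟩ := hz
    have h9 : dist v c + dist c c = dist v c := by rw [dist_self, add_zero]
    have h10 := hzprop c h9
    exact btw_unique hT' h10 hc'btw (by rw [hzM, hc'M])
end

section
/- Let (T,v) be a rooted ℝ-tree. Then there exists a unique maximal geodesically complete rooted subtree (T_∞, v) of (T,v); that is, a subtree containing v that is geodesically complete and contains every geodesically complete subtree of (T,v) rooted at v. -/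
open NNReal

/-- A geodesically complete rooted subtree of `(T,v)`: it contains the root,
it contains the arc `[v,x]` to each of its points (characterized metrically),
and every point of it other than the root lies on a geodesic ray from the root
contained in the subtree. -/
def IsGeodCompleteSubtree {T : Type*} [MetricSpace T] (v : T) (S : Set T) : Prop :=
  v ∈ S ∧
  (∀ x ∈ S, ∀ y : T, dist v y + dist y x = dist v x → y ∈ S) ∧
  (∀ x ∈ S, x ≠ v → ∃ f : ℝ≥0 → T, Isometry f ∧ f 0 = v ∧
      x ∈ Set.range f ∧ Set.range f ⊆ S)

/-- Every rooted `ℝ`-tree has a unique maximal geodesically complete rooted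
subtree. -/
theorem exists_unique_maximal_geodesically_complete_subtree
    {T : Type*} [MetricSpace T] (hT : IsRTree T) (v : T) :
    ∃! S : Set T, IsGeodCompleteSubtree v S ∧
      ∀ S' : Set T, IsGeodCompleteSubtree v S' → S' ⊆ S := by
  have hsingle : IsGeodCompleteSubtree v {v} := by
    refine ⟨rfl, fun x hx y hy => ?_, fun x hx hne => absurd hx (by simpa using hne)⟩
    simp only [Set.mem_singleton_iff] at hx ⊢
    rw [hx, dist_self] at hy
    have h1 : dist v y = 0 := by
      have := dist_nonneg (x := v) (y := y)
      have := dist_nonneg (x := y) (y := v)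
      linarith
    exact (dist_eq_zero.mp h1).symm
  refine ⟨⋃₀ {S | IsGeodCompleteSubtree v S}, ⟨⟨?_, ?_, ?_⟩, ?_⟩, ?_⟩
  · exact ⟨{v}, hsingle, rfl⟩
  · rintro x ⟨S, hS, hxS⟩ y hy
    exact ⟨S, hS, hS.2.1 x hxS y hy⟩
  · rintro x ⟨S, hS, hxS⟩ hne
    obtain ⟨f, hf, h0, hx, hsub⟩ := hS.2.2 x hxS hne
    exact ⟨f, hf, h0, hx, hsub.trans (Set.subset_sUnion_of_mem hS)⟩
  · exact fun S' hS' => Set.subset_sUnion_of_mem hS'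
  · rintro S ⟨hS, hmax⟩
    exact Set.Subset.antisymm (Set.subset_sUnion_of_mem hS)
      (Set.sUnion_subset fun S' hS' => hmax S' hS')
end

section
/- An inverse sequence (X_n, p_n) of sets is Mittag-Leffler if and only if it is isomorphic in the category Tower-Set to an inverse sequence with surjective bonding maps. -/
/-- Composite bonding map `p_{n m} : X_m → X_n` (for `n ≤ m`) of an inverse
sequence `(X_n, p_n)`. -/
def tbond (X : ℕ → Type u) (p : ∀ n, X (n + 1) → X n) {n m : ℕ} (h : n ≤ m) :
    X m → X n :=
  Nat.leRecOn h (fun {k} (g : X k → X n) (x : X (k + 1)) => g (p k x)) id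

/-- The Mittag-Leffler property for an inverse sequence of sets: for every
`n₀` there is `n₁ > n₀` such that the image of `X_n` in `X_{n₀}` equals the
image of `X_{n₁}` in `X_{n₀}` for all `n > n₁`. -/
def IsML (X : ℕ → Type u) (p : ∀ n, X (n + 1) → X n) : Prop :=
  ∀ n₀ : ℕ, ∃ n₁ : ℕ, ∃ h₁ : n₀ < n₁, ∀ n : ℕ, ∀ h : n₁ < n,
    Set.range (tbond X p (h₁.le.trans h.le)) = Set.range (tbond X p h₁.le)

/-- A morphism of inverse sequences `(X_n,p_n) → (Y_n,q_n)` in `Tower-Set`: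
an index function `idx` together with maps `f n : X_{idx n} → Y n` satisfying
the usual coherence condition after composing with high enough bonding maps. -/
structure TowerMor (X : ℕ → Type u) (p : ∀ n, X (n + 1) → X n)
    (Y : ℕ → Type v) (q : ∀ n, Y (n + 1) → Y n) where
  idx : ℕ → ℕ
  f : ∀ n, X (idx n) → Y n
  coh : ∀ n n' : ℕ, ∀ h : n ≤ n', ∃ m : ℕ, ∃ h1 : idx n ≤ m, ∃ h2 : idx n' ≤ m,
    ∀ x : X m, f n (tbond X p h1 x) = tbond Y q h (f n' (tbond X p h2 x))

/-- Two inverse sequences are isomorphic in `Tower-Set` if there are morphisms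
in both directions whose composites are equivalent to the identity morphisms
(equality after composing with sufficiently high bonding maps). -/
def TowerIso (X : ℕ → Type u) (p : ∀ n, X (n + 1) → X n)
    (Y : ℕ → Type v) (q : ∀ n, Y (n + 1) → Y n) : Prop :=
  ∃ (F : TowerMor X p Y q) (G : TowerMor Y q X p),
    (∀ n : ℕ, ∃ m : ℕ, ∃ h1 : F.idx (G.idx n) ≤ m, ∃ h2 : n ≤ m,
      ∀ x : X m, G.f n (F.f (G.idx n) (tbond X p h1 x)) = tbond X p h2 x) ∧
    (∀ n : ℕ, ∃ m : ℕ, ∃ h1 : G.idx (F.idx n) ≤ m, ∃ h2 : n ≤ m,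
      ∀ y : Y m, F.f n (G.f (F.idx n) (tbond Y q h1 y)) = tbond Y q h2 y)

/- ### Auxiliary lemmas about `tbond` -/

theorem tbond_self (X : ℕ → Type u) (p : ∀ n, X (n + 1) → X n) {n : ℕ}
    (h : n ≤ n) (x : X n) : tbond X p h x = x := by
  have : tbond X p h = id := Nat.leRecOn_self (C := fun k => X k → X n) id
  rw [this]; rfl

theorem tbond_succ (X : ℕ → Type u) (p : ∀ n, X (n + 1) → X n) {n m : ℕ}
    (h : n ≤ m) (h' : n ≤ m + 1) (x : X (m + 1)) :
    tbond X p h' x = tbond X p h (p m x) := by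
  have : tbond X p h' = fun x => tbond X p h (p m x) :=
    Nat.leRecOn_succ (C := fun k => X k → X n) h (h2 := h') id
  rw [this]

theorem tbond_trans (X : ℕ → Type u) (p : ∀ n, X (n + 1) → X n) {n m k : ℕ}
    (h1 : n ≤ m) (h2 : m ≤ k) :
    ∀ (h3 : n ≤ k) (x : X k), tbond X p h3 x = tbond X p h1 (tbond X p h2 x) := by
  induction k, h2 using Nat.le_induction with
  | base => intro h3 x; rw [tbond_self]
  | succ k hk ih =>
      intro h3 x
      rw [tbond_succ X p (h1.trans hk) h3, tbond_succ X p hk]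
      exact ih _ _

theorem tbond_step (X : ℕ → Type u) (p : ∀ n, X (n + 1) → X n) {n m : ℕ}
    (h : n + 1 ≤ m) (h' : n ≤ m) (z : X m) :
    tbond X p h' z = p n (tbond X p h z) := by
  rw [tbond_trans X p (Nat.le_succ n) h h' z, tbond_succ X p (le_refl n),
    tbond_self]

theorem tbond_surj (Y : ℕ → Type v) (q : ∀ n, Y (n + 1) → Y n)
    (hq : ∀ n, Function.Surjective (q n)) {n m : ℕ} (h : n ≤ m) :
    Function.Surjective (tbond Y q h) := by
  induction m, h using Nat.le_induction with
  | base => intro y; exact ⟨y, tbond_self Y q _ y⟩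
  | succ m hm ih =>
      intro y
      obtain ⟨z, hz⟩ := ih y
      obtain ⟨w, hw⟩ := hq m z
      exact ⟨w, by rw [tbond_succ Y q hm, hw, hz]⟩

/-- An inverse sequence of sets is Mittag-Leffler if and only if it is
isomorphic in `Tower-Set` to an inverse sequence with surjective bonding
maps. -/
theorem isML_iff_iso_to_surjective_tower
    (X : ℕ → Type u) (p : ∀ n, X (n + 1) → X n) :
    IsML X p ↔
      ∃ (Y : ℕ → Type u) (q : ∀ n, Y (n + 1) → Y n),
        (∀ n, Function.Surjective (q n)) ∧ TowerIso X p Y q := by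
  constructor
  · -- forward direction: ML ⇒ isomorphic to a surjective tower
    intro hML
    classical
    choose N hlt hstab using hML
    set stable : ∀ n, Set (X n) := fun n => Set.range (tbond X p (hlt n).le)
      with hstable
    have hstab' : ∀ n m (h : n ≤ m), N n ≤ m →
        Set.range (tbond X p h) = stable n := by
      intro n m h hm
      rcases eq_or_lt_of_le hm with he | hl
      · subst he; rfl
      · exact hstab n m hl
    have hsub : ∀ n m (h : n ≤ m), stable n ⊆ Set.range (tbond X p h) := by
      intro n m h
      rw [← hstab' n (max m (N n)) (h.trans (le_max_left _ _)) (le_max_right _ _)]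
      rintro _ ⟨z, rfl⟩
      exact ⟨tbond X p (le_max_left m (N n)) z,
        (tbond_trans X p h (le_max_left m (N n)) _ z).symm⟩
    have hcl : ∀ n (x : X (n + 1)), x ∈ stable (n + 1) → p n x ∈ stable n := by
      intro n x hx
      obtain ⟨z, rfl⟩ := hsub (n + 1) (max (N n) (n + 1)) (le_max_right _ _) hx
      rw [← tbond_step X p (le_max_right (N n) (n + 1))
        ((Nat.le_succ n).trans (le_max_right _ _)) z,
        ← hstab' n (max (N n) (n + 1)) ((Nat.le_succ n).trans (le_max_right _ _))
          (le_max_left _ _)]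
      exact Set.mem_range_self z
    have hqsurj : ∀ n (y : X n), y ∈ stable n →
        ∃ x : X (n + 1), x ∈ stable (n + 1) ∧ p n x = y := by
      intro n y hy
      have hn1m : n + 1 ≤ max (N n) (N (n + 1)) :=
        (hlt (n + 1)).le.trans (le_max_right _ _)
      have hnm : n ≤ max (N n) (N (n + 1)) := (Nat.le_succ n).trans hn1m
      rw [← hstab' n (max (N n) (N (n + 1))) hnm (le_max_left _ _)] at hy
      obtain ⟨z, rfl⟩ := hy
      refine ⟨tbond X p hn1m z, ?_, (tbond_step X p hn1m hnm z).symm⟩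
      rw [← hstab' (n + 1) (max (N n) (N (n + 1))) hn1m (le_max_right _ _)]
      exact Set.mem_range_self z
    -- the surjective tower
    refine ⟨fun n => {x : X n // x ∈ stable n},
      fun n x => ⟨p n x.1, hcl n x.1 x.2⟩, ?_, ?_⟩
    · intro n ⟨y, hy⟩
      obtain ⟨x, hx, hxy⟩ := hqsurj n y hy
      exact ⟨⟨x, hx⟩, Subtype.ext hxy⟩
    · set Y : ℕ → Type u := fun n => {x : X n // x ∈ stable n} with hY
      set q : ∀ n, Y (n + 1) → Y n := fun n x => ⟨p n x.1, hcl n x.1 x.2⟩ with hq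
      have hval : ∀ n m (h : n ≤ m) (x : Y m),
          (tbond Y q h x).1 = tbond X p h x.1 := by
        intro n m h
        induction m, h using Nat.le_induction with
        | base =>
            intro x
            rw [tbond_self Y q _ x, tbond_self X p _ x.1]
        | succ m hm ih =>
            intro x
            rw [tbond_succ Y q hm _ x, ih (q m x), tbond_succ X p hm _ x.1]
      refine ⟨⟨fun n => N n, fun n x => ⟨tbond X p (hlt n).le x,
          Set.mem_range_self x⟩, ?_⟩,
        ⟨fun n => n, fun n x => x.1, ?_⟩, ?_, ?_⟩
      · -- coherence of F
        intro n n' h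
        refine ⟨max (N n) (N n'), le_max_left _ _, le_max_right _ _, fun x => ?_⟩
        apply Subtype.ext
        rw [hval]
        dsimp only
        have e1 := tbond_trans X p (hlt n).le (le_max_left (N n) (N n'))
          ((hlt n).le.trans (le_max_left _ _)) x
        have e2 := tbond_trans X p (hlt n').le (le_max_right (N n) (N n'))
          ((hlt n').le.trans (le_max_right _ _)) x
        have e3 := tbond_trans X p h ((hlt n').le.trans (le_max_right (N n) (N n')))
          ((hlt n).le.trans (le_max_left _ _)) x
        exact e1.symm.trans (e3.trans (congrArg (tbond X p h) e2))
      · -- coherence of G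
        intro n n' h
        refine ⟨n', h, le_refl _, fun y => ?_⟩
        rw [tbond_self Y q (le_refl n') y, hval]
      · -- G ∘ F ≃ id
        intro n
        refine ⟨N n, le_refl _, (hlt n).le, fun x => ?_⟩
        dsimp only
        rw [tbond_self X p (le_refl (N n)) x]
      · -- F ∘ G ≃ id
        intro n
        refine ⟨N n, le_refl _, (hlt n).le, fun y => ?_⟩
        apply Subtype.ext
        dsimp only
        rw [tbond_self Y q (le_refl (N n)) y, hval]
  · -- backward direction: isomorphic to a surjective tower ⇒ ML
    rintro ⟨Y, q, hq, F, G, hGF, _⟩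
    intro n₀
    obtain ⟨m₀, hm1, hm2, hid⟩ := hGF n₀
    have hRsub : ∀ m (h : n₀ ≤ m),
        Set.range (G.f n₀) ⊆ Set.range (tbond X p h) := by
      intro m h
      rintro _ ⟨y₀, rfl⟩
      obtain ⟨M, hM1, hM2, hcoh⟩ := G.coh n₀ m h
      obtain ⟨y, rfl⟩ := tbond_surj Y q hq hM1 y₀
      exact ⟨G.f m (tbond Y q hM2 y), (hcoh y).symm⟩
    have hsubR : Set.range (tbond X p hm2) ⊆ Set.range (G.f n₀) := by
      rintro _ ⟨x, rfl⟩
      rw [← hid x]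
      exact Set.mem_range_self _
    have key : ∀ m (hm : m₀ ≤ m) (h' : n₀ ≤ m),
        Set.range (tbond X p h') = Set.range (G.f n₀) := by
      intro m hm h'
      apply Set.Subset.antisymm
      · rintro _ ⟨x, rfl⟩
        rw [tbond_trans X p hm2 hm h' x]
        exact hsubR (Set.mem_range_self _)
      · exact hRsub m h'
    refine ⟨m₀ + 1, Nat.lt_succ_of_le hm2, fun n h => ?_⟩
    rw [key n ((Nat.le_succ m₀).trans h.le) _, key (m₀ + 1) (Nat.le_succ m₀) _]
end
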